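/- For an alternating path P⃗ₙ on an odd number n of vertices (an orientation of the path Pₙ in which every vertex is a source or a sink), th(P⃗ₙ) = (n−1)/2 + ⌈√(n+1) − 1/2⌉; and for even n, th(P⃗ₙ) = n/2 + ⌈√(n+1) − 1⌉. -/
import Mathlib

open Set

/-- One time step of standard zero forcing on a digraph with arc relation `A`:
every blue vertex having a unique white out-neighbor forces it blue. -/
def dstep {V : Type*} (A : V → V → Prop) (S : Set V) : Set V :=
  S ∪ {w | ∃ u ∈ S, A u w ∧ ∀ x, A u x → x ∉ S → x = w}

/-- `B` is a zero forcing set of the digraph with arc relation `A`. -/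
def IsZFS {V : Type*} (A : V → V → Prop) (B : Set V) : Prop :=
  ∃ t, (dstep A)^[t] B = Set.univ

/-- Propagation time of `B` in the digraph with arc relation `A`. -/
noncomputable def dpt {V : Type*} (A : V → V → Prop) (B : Set V) : ℕ :=
  sInf {t | (dstep A)^[t] B = Set.univ}

/-- The throttling number of the digraph with arc relation `A`. -/
noncomputable def dth {V : Type*} (A : V → V → Prop) : ℕ :=
  sInf {k | ∃ B : Set V, IsZFS A B ∧ k = B.ncard + dpt A B}

namespace AltPath

def Arc (n : ℕ) : Fin n → Fin n → Prop :=
  fun i j => ((j : ℕ) = (i : ℕ) + 1 ∨ (i : ℕ) = (j : ℕ) + 1) ∧ Even (i : ℕ)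

lemma subset_dstep {V : Type*} (A : V → V → Prop) (S : Set V) : S ⊆ dstep A S :=
  Set.subset_union_left

lemma mem_dstep_force {V : Type*} {A : V → V → Prop} {S : Set V} {w u : V}
    (hu : u ∈ S) (hA : A u w) (h : ∀ x, A u x → x ∉ S → x = w) : w ∈ dstep A S :=
  Set.mem_union_right _ ⟨u, hu, hA, h⟩

lemma subset_iterate {V : Type*} (A : V → V → Prop) (B : Set V) (t : ℕ) :
    B ⊆ (dstep A)^[t] B := by
  induction t with
  | zero => simp
  | succ t ih =>
    rw [Function.iterate_succ_apply']
    exact ih.trans (subset_dstep A _)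

lemma even_mem_of_mem_dstep {n : ℕ} {S : Set (Fin n)} {v : Fin n}
    (hv : v ∈ dstep (Arc n) S) (he : Even (v : ℕ)) : v ∈ S := by
  rcases hv with hv | ⟨u, hu, ⟨hadj, hue⟩, -⟩
  · exact hv
  · exfalso
    rw [Nat.even_iff] at he hue
    omega

lemma zfs_even_subset {n : ℕ} {B : Set (Fin n)} (h : IsZFS (Arc n) B) :
    ∀ v : Fin n, Even (v : ℕ) → v ∈ B := by
  intro v hv
  obtain ⟨t, ht⟩ := h
  have hmem : v ∈ (dstep (Arc n))^[t] B := ht ▸ Set.mem_univ v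
  clear ht
  induction t with
  | zero => exact hmem
  | succ t ih =>
    rw [Function.iterate_succ_apply'] at hmem
    exact ih (even_mem_of_mem_dstep hmem hv)

/-- covering condition for an odd-valued vertex `v` at time `t`. -/
def covered {n : ℕ} (B : Set (Fin n)) (t : ℕ) (v : ℕ) : Prop :=
  v + 1 ≤ 2*t ∨ (Odd n ∧ n ≤ v + 2*t) ∨
    ∃ s ∈ B, Odd (s : ℕ) ∧ v ≤ (s : ℕ) + 2*t ∧ (s : ℕ) ≤ v + 2*t

lemma covered_mono {n : ℕ} {B : Set (Fin n)} {t v : ℕ} (h : covered B t v) :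
    covered B (t+1) v := by
  rcases h with h | ⟨h1, h2⟩ | ⟨s, hs, h1, h2, h3⟩
  · exact Or.inl (by omega)
  · exact Or.inr (Or.inl ⟨h1, by omega⟩)
  · exact Or.inr (Or.inr ⟨s, hs, h1, by omega, by omega⟩)

section Force

variable {n : ℕ} {S : Set (Fin n)}

variable (hE : ∀ v : Fin n, Even (v : ℕ) → v ∈ S)

include hE in
lemma force_one {w : Fin n} (hw1 : (w : ℕ) = 1) : w ∈ dstep (Arc n) S := by
  have h0 : 0 < n := lt_of_le_of_lt (Nat.zero_le _) w.isLt
  refine mem_dstep_force (u := ⟨0, h0⟩) (hE _ (by simp)) ⟨Or.inl (by simp [hw1]), by simp⟩ ?_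
  rintro x ⟨hx | hx, -⟩ -
  · exact Fin.ext (by simp at hx ⊢; omega)
  · simp at hx

include hE in
lemma force_last {w : Fin n} (hn : Odd n) (hw : (w : ℕ) + 2 = n) : w ∈ dstep (Arc n) S := by
  have hlt : n - 1 < n := by omega
  have hno := Nat.odd_iff.mp hn
  refine mem_dstep_force (u := ⟨n-1, hlt⟩) (hE _ (by simp [Nat.even_iff]; omega))
    ⟨Or.inr (by simp; omega), by simp [Nat.even_iff]; omega⟩ ?_
  rintro x ⟨hx | hx, -⟩ -
  · have := x.isLt; simp at hx; omega
  · exact Fin.ext (by simp at hx ⊢; omega)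

include hE in
lemma force_left {w x : Fin n} (hw : Odd (w : ℕ)) (hx : (x : ℕ) + 2 = (w : ℕ))
    (hxS : x ∈ S) : w ∈ dstep (Arc n) S := by
  have hlt : (w : ℕ) - 1 < n := by have := w.isLt; omega
  have hwo := Nat.odd_iff.mp hw
  refine mem_dstep_force (u := ⟨(w : ℕ) - 1, hlt⟩) (hE _ (by simp [Nat.even_iff]; omega))
    ⟨Or.inl (by simp; omega), by simp [Nat.even_iff]; omega⟩ ?_
  rintro y ⟨hy | hy, -⟩ hyS
  · exact Fin.ext (by simp at hy ⊢; omega)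
  · exfalso
    have : y = x := Fin.ext (by simp at hy ⊢; omega)
    exact hyS (this ▸ hxS)

include hE in
lemma force_right {w x : Fin n} (hw : Odd (w : ℕ)) (hx : (w : ℕ) + 2 = (x : ℕ))
    (hxS : x ∈ S) : w ∈ dstep (Arc n) S := by
  have hlt : (w : ℕ) + 1 < n := by have := x.isLt; omega
  have hwo := Nat.odd_iff.mp hw
  refine mem_dstep_force (u := ⟨(w : ℕ) + 1, hlt⟩) (hE _ (by simp [Nat.even_iff]; omega))
    ⟨Or.inr (by simp), by simp [Nat.even_iff]; omega⟩ ?_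
  rintro y ⟨hy | hy, -⟩ hyS
  · exfalso
    have : y = x := Fin.ext (by simp at hy ⊢; omega)
    exact hyS (this ▸ hxS)
  · exact Fin.ext (by simp at hy ⊢; omega)

end Force

section Iter

variable {n : ℕ} {B : Set (Fin n)}

lemma mem_iterate_of_covered (hB : ∀ v : Fin n, Even (v : ℕ) → v ∈ B) (t : ℕ) :
    ∀ v : Fin n, Odd (v : ℕ) → covered B t (v : ℕ) → v ∈ (dstep (Arc n))^[t] B := by
  induction t with
  | zero =>
    intro v hv hc
    have hvlt := v.isLt
    rcases hc with h | ⟨hn, h⟩ | ⟨s, hs, hso, h1, h2⟩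
    · omega
    · omega
    · have : s = v := Fin.ext (by omega)
      exact this ▸ hs
  | succ t ih =>
    intro v hv hc
    rw [Function.iterate_succ_apply']
    have hES : ∀ u : Fin n, Even (u : ℕ) → u ∈ (dstep (Arc n))^[t] B :=
      fun u hu => subset_iterate _ _ _ (hB u hu)
    by_cases hct : covered B t (v : ℕ)
    · exact subset_dstep _ _ (ih v hv hct)
    have hvlt := v.isLt
    have hvo := Nat.odd_iff.mp hv
    rw [covered] at hct
    push_neg at hct
    obtain ⟨hcA, hcB, hcC⟩ := hct
    rcases hc with h | ⟨hn, h⟩ | ⟨s, hs, hso, h1, h2⟩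
    · -- left propagation
      by_cases hv1 : (v : ℕ) = 1
      · exact force_one hES hv1
      · have hxlt : (v : ℕ) - 2 < n := by omega
        set x : Fin n := ⟨(v : ℕ) - 2, hxlt⟩ with hxdef
        have hxo : Odd (x : ℕ) := Nat.odd_iff.mpr (by simp [hxdef]; omega)
        have hxS : x ∈ (dstep (Arc n))^[t] B :=
          ih x hxo (Or.inl (by simp [hxdef]; omega))
        exact force_left hES hv (by simp [hxdef]; omega) hxS
    · -- right propagation
      have hno := Nat.odd_iff.mp hn
      by_cases hv2 : (v : ℕ) + 2 = n
      · exact force_last hES hn hv2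
      · have hxlt : (v : ℕ) + 2 < n := by omega
        set x : Fin n := ⟨(v : ℕ) + 2, hxlt⟩ with hxdef
        have hxo : Odd (x : ℕ) := Nat.odd_iff.mpr (by simp [hxdef]; omega)
        have hxS : x ∈ (dstep (Arc n))^[t] B :=
          ih x hxo (Or.inr (Or.inl ⟨hn, by simp [hxdef]; omega⟩))
        exact force_right hES hv (by simp [hxdef]) hxS
    · -- seed propagation
      have hslt := s.isLt
      have hsod := Nat.odd_iff.mp hso
      have hd := hcC s hs hso
      rcases (by omega : (s : ℕ) + 2*t + 2 = (v : ℕ) ∨ (v : ℕ) + 2*t + 2 = (s : ℕ)) with hcase | hcase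
      · have hxlt : (v : ℕ) - 2 < n := by omega
        set x : Fin n := ⟨(v : ℕ) - 2, hxlt⟩ with hxdef
        have hxo : Odd (x : ℕ) := Nat.odd_iff.mpr (by simp [hxdef]; omega)
        have hxS : x ∈ (dstep (Arc n))^[t] B :=
          ih x hxo (Or.inr (Or.inr ⟨s, hs, hso, by simp [hxdef]; omega, by simp [hxdef]; omega⟩))
        exact force_left hES hv (by simp [hxdef]; omega) hxS
      · have hxlt : (v : ℕ) + 2 < n := by omega
        set x : Fin n := ⟨(v : ℕ) + 2, hxlt⟩ with hxdef
        have hxo : Odd (x : ℕ) := Nat.odd_iff.mpr (by simp [hxdef]; omega)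
        have hxS : x ∈ (dstep (Arc n))^[t] B :=
          ih x hxo (Or.inr (Or.inr ⟨s, hs, hso, by simp [hxdef]; omega, by simp [hxdef]; omega⟩))
        exact force_right hES hv (by simp [hxdef]) hxS

lemma covered_of_mem_iterate (t : ℕ) :
    ∀ v : Fin n, v ∈ (dstep (Arc n))^[t] B → v ∈ B ∨ (Odd (v : ℕ) ∧ covered B t (v : ℕ)) := by
  induction t with
  | zero => intro v hv; exact Or.inl hv
  | succ t ih =>
    intro v hv
    rw [Function.iterate_succ_apply'] at hv
    rcases hv with hv | ⟨u, huS, ⟨hadj, hue⟩, huniq⟩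
    · rcases ih v hv with h | ⟨h1, h2⟩
      · exact Or.inl h
      · exact Or.inr ⟨h1, covered_mono h2⟩
    · have hue' := Nat.even_iff.mp hue
      have hvo : Odd (v : ℕ) := Nat.odd_iff.mpr (by omega)
      have hult := u.isLt
      have hvlt := v.isLt
      refine Or.inr ⟨hvo, ?_⟩
      by_cases hu0 : (u : ℕ) = 0
      · exact Or.inl (by omega)
      by_cases hun : (u : ℕ) + 1 = n
      · have hno : Odd n := Nat.odd_iff.mpr (by omega)
        exact Or.inr (Or.inl ⟨hno, by omega⟩)
      · -- interior even vertex; the other neighbor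
        have holt : ((if (v:ℕ) = (u:ℕ)+1 then (u:ℕ)-1 else (u:ℕ)+1)) < n := by
          split <;> omega
        set o : Fin n := ⟨_, holt⟩ with hodef
        have hov : (o : ℕ) = (u:ℕ)-1 ∨ (o : ℕ) = (u:ℕ)+1 := by
          simp only [hodef]; split <;> simp
        have honev : (o : ℕ) ≠ (v : ℕ) := by
          simp only [hodef]; split <;> omega
        have hArcuo : Arc n u o := by
          refine ⟨?_, hue⟩
          simp only [hodef]; split
          · right; omega
          · left; rfl
        by_cases hoS : o ∈ (dstep (Arc n))^[t] B
        · rcases ih o hoS with hoB | ⟨hoo, hoc⟩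
          · refine Or.inr (Or.inr ⟨o, hoB, Nat.odd_iff.mpr (by omega), by omega, by omega⟩)
          · rcases hoc with h | ⟨h1, h2⟩ | ⟨s, hs, hso, h1, h2⟩
            · exact Or.inl (by omega)
            · exact Or.inr (Or.inl ⟨h1, by omega⟩)
            · exact Or.inr (Or.inr ⟨s, hs, hso, by omega, by omega⟩)
        · exact absurd (congrArg Fin.val (huniq o hArcuo hoS)) honev

end Iter

section Cover

lemma cover_even (m t k : ℕ) (hk : k < m) (hkt : t ≤ k) :
    ∃ p, p < m ∧ (∃ i, m - 1 - p = (2*t+1)*i + t) ∧ p ≤ k + t ∧ k ≤ p + t := by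
  obtain ⟨i, q, hj, hq⟩ : ∃ i q, (2*t+1)*i + q = m - 1 - k ∧ q < 2*t+1 :=
    ⟨_, _, Nat.div_add_mod _ _, Nat.mod_lt _ (by omega)⟩
  refine ⟨k + q - t, ?_, ⟨i, ?_⟩, by omega, by omega⟩ <;>
  · generalize hX : (2*t+1)*i = X at hj ⊢
    omega

lemma cover_odd (m t k : ℕ) (hk : k < m) (hkt : t ≤ k) (hk2 : k + t < m) :
    ∃ p, p < m ∧ (∃ i, m - 1 - p = (2*t+1)*i + 2*t) ∧ p ≤ k + t ∧ k ≤ p + t := by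
  obtain ⟨i, q, hj, hq⟩ : ∃ i q, (2*t+1)*i + q = m - 1 - k ∧ q < 2*t+1 :=
    ⟨_, _, Nat.div_add_mod _ _, Nat.mod_lt _ (by omega)⟩
  have hjt : t ≤ m - 1 - k := by omega
  by_cases hqt : q < t
  · have hipos : i ≠ 0 := by
      rintro rfl
      simp at hj
      omega
    obtain ⟨i', rfl⟩ : ∃ i', i = i' + 1 := ⟨i - 1, by omega⟩
    have hj' : (2*t+1)*i' + (2*t+1) + q = m - 1 - k := by rw [← hj]; ring
    refine ⟨k + q + 1, ?_, ⟨i', ?_⟩, by omega, by omega⟩ <;>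
    · generalize hX : (2*t+1)*i' = X at hj' ⊢
      omega
  · refine ⟨k + q - 2*t, ?_, ⟨i, ?_⟩, by omega, by omega⟩ <;>
    · generalize hX : (2*t+1)*i = X at hj ⊢
      omega

end Cover

section Count

lemma ncard_evens_ge (n : ℕ) : (n+1)/2 ≤ {v : Fin n | Even (v : ℕ)}.ncard := by
  rcases Nat.eq_zero_or_pos n with rfl | hn
  · simp
  have h : ((n+1)/2 : ℕ) = (↑(Finset.range ((n+1)/2)) : Set ℕ).ncard := by
    rw [Set.ncard_coe_finset, Finset.card_range]
  rw [h]
  refine Set.ncard_le_ncard_of_injOn (fun k => (⟨2*k % n, Nat.mod_lt _ hn⟩ : Fin n)) ?_ ?_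
    (Set.toFinite _)
  · intro k hk
    simp only [Finset.coe_range, Set.mem_Iio] at hk
    have h2k : 2*k < n := by omega
    simp only [Set.mem_setOf_eq, Nat.mod_eq_of_lt h2k, Nat.even_iff]
    omega
  · intro k1 h1 k2 h2 he
    simp only [Finset.coe_range, Set.mem_Iio] at h1 h2
    have e1 : 2*k1 < n := by omega
    have e2 : 2*k2 < n := by omega
    have := congrArg Fin.val he
    simp only [Nat.mod_eq_of_lt e1, Nat.mod_eq_of_lt e2] at this
    omega

lemma ncard_evens_le (n : ℕ) : {v : Fin n | Even (v : ℕ)}.ncard ≤ (n+1)/2 := by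
  have h : ((n+1)/2 : ℕ) = (↑(Finset.range ((n+1)/2)) : Set ℕ).ncard := by
    rw [Set.ncard_coe_finset, Finset.card_range]
  rw [h]
  refine Set.ncard_le_ncard_of_injOn (fun v => (v : ℕ)/2) ?_ ?_ (Set.toFinite _)
  · intro v hv
    simp only [Set.mem_setOf_eq, Nat.even_iff] at hv
    have := v.isLt
    simp only [Finset.coe_range, Set.mem_Iio]
    omega
  · intro v1 h1 v2 h2 he
    simp only [Set.mem_setOf_eq, Nat.even_iff] at h1 h2
    simp only at he
    exact Fin.ext (by omega)

lemma dth_mem_data {n k : ℕ}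
    (hk : ∃ B : Set (Fin n), IsZFS (Arc n) B ∧ k = B.ncard + dpt (Arc n) B) :
    ∃ b t : ℕ, (n+1)/2 + b + t ≤ k ∧
      ∀ C : Finset ℕ, (∀ j, j < n/2 → Odd n → n/2 ≤ j + t → j ∈ C) →
        n/2 ≤ t + b * (2*t+1) + C.card := by
  obtain ⟨B, hZ, rfl⟩ := hk
  have hEB : ∀ v : Fin n, Even (v : ℕ) → v ∈ B := zfs_even_subset hZ
  set E : Set (Fin n) := {v : Fin n | Even (v : ℕ)} with hEdef
  set t := dpt (Arc n) B with htdef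
  have htmem : (dstep (Arc n))^[t] B = Set.univ := Nat.sInf_mem hZ
  refine ⟨(B \ E).ncard, t, ?_, ?_⟩
  · have hsplit : E ∪ (B \ E) = B := Set.union_diff_cancel (fun v hv => hEB v hv)
    have hcard : B.ncard = E.ncard + (B \ E).ncard := by
      conv_lhs => rw [← hsplit]
      exact Set.ncard_union_eq Set.disjoint_sdiff_right (Set.toFinite _) (Set.toFinite _)
    have hge := ncard_evens_ge n
    rw [← hEdef] at hge
    omega
  · intro C hC
    have hfin : (B \ E).Finite := Set.toFinite _
    set J : Finset ℕ := hfin.toFinset.image (fun v : Fin n => (v : ℕ)/2) with hJdef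
    have hJcard : J.card ≤ (B \ E).ncard := by
      calc J.card ≤ hfin.toFinset.card := Finset.card_image_le
        _ = (B \ E).ncard := by rw [Set.ncard_eq_toFinset_card _ hfin]
    have hsub : Finset.range (n/2) ⊆
        Finset.range t ∪ (C ∪ J.biUnion (fun j => Finset.Icc (j - t) (j + t))) := by
      intro k hk
      rw [Finset.mem_range] at hk
      have hvlt : 2*k+1 < n := by omega
      set v : Fin n := ⟨2*k+1, hvlt⟩ with hvdef
      have hvv : (v : ℕ) = 2*k+1 := rfl
      have hv : v ∈ B ∨ (Odd (v : ℕ) ∧ covered B t (v : ℕ)) :=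
        covered_of_mem_iterate t v (htmem ▸ Set.mem_univ v)
      have hcov : covered B t (2*k+1) := by
        rcases hv with hv | ⟨-, hc⟩
        · exact Or.inr (Or.inr ⟨v, hv, Nat.odd_iff.mpr (by omega),
            by omega, by omega⟩)
        · exact hc
      rcases hcov with h | ⟨h1, h2⟩ | ⟨s, hs, hso, h1, h2⟩
      · exact Finset.mem_union_left _ (Finset.mem_range.mpr (by omega))
      · refine Finset.mem_union_right _ (Finset.mem_union_left _ (hC k (by omega) h1 ?_))
        have hno := Nat.odd_iff.mp h1
        omega
      · refine Finset.mem_union_right _ (Finset.mem_union_right _ ?_)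
        have hsod := Nat.odd_iff.mp hso
        refine Finset.mem_biUnion.mpr ⟨(s : ℕ)/2, ?_, Finset.mem_Icc.mpr (by omega)⟩
        refine Finset.mem_image.mpr ⟨s, hfin.mem_toFinset.mpr ⟨hs, ?_⟩, rfl⟩
        simp only [hEdef, Set.mem_setOf_eq, Nat.even_iff]
        omega
    have hcb : (J.biUnion (fun j => Finset.Icc (j - t) (j + t))).card ≤ J.card * (2*t+1) := by
      calc (J.biUnion (fun j => Finset.Icc (j - t) (j + t))).card
          ≤ ∑ j ∈ J, (Finset.Icc (j - t) (j + t)).card := Finset.card_biUnion_le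
        _ ≤ ∑ _j ∈ J, (2*t+1) := Finset.sum_le_sum (fun j _ => by rw [Nat.card_Icc]; omega)
        _ = J.card * (2*t+1) := by rw [Finset.sum_const, smul_eq_mul]
    have hm := Finset.card_le_card hsub
    rw [Finset.card_range] at hm
    have h1 : (Finset.range t ∪ (C ∪ J.biUnion (fun j => Finset.Icc (j - t) (j + t)))).card
        ≤ (Finset.range t).card + ((C ∪ J.biUnion (fun j => Finset.Icc (j - t) (j + t))).card) :=
      Finset.card_union_le _ _
    have h2 : (C ∪ J.biUnion (fun j => Finset.Icc (j - t) (j + t))).card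
        ≤ C.card + (J.biUnion (fun j => Finset.Icc (j - t) (j + t))).card :=
      Finset.card_union_le _ _
    have h3 : J.card * (2*t+1) ≤ (B \ E).ncard * (2*t+1) := Nat.mul_le_mul_right _ hJcard
    rw [Finset.card_range] at h1
    omega

end Count

section Upper

lemma dth_le_general (n t : ℕ) (P : Finset ℕ)
    (hcov : ∀ k, k < n/2 →
      k + 1 ≤ t ∨ (Odd n ∧ n/2 ≤ k + t) ∨ ∃ p ∈ P, p < n/2 ∧ k ≤ p + t ∧ p ≤ k + t) :
    dth (Arc n) ≤ (n+1)/2 + P.card + t := by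
  set B : Set (Fin n) := {v | Even (v : ℕ) ∨ (Odd (v : ℕ) ∧ (v : ℕ)/2 ∈ P)} with hBdef
  have hBE : ∀ v : Fin n, Even (v : ℕ) → v ∈ B := fun v hv => Or.inl hv
  have hconv : ∀ v : Fin n, Odd (v : ℕ) → covered B t (v : ℕ) := by
    intro v hv
    have hvlt := v.isLt
    obtain ⟨k, hk⟩ := hv
    have hkm : k < n/2 := by omega
    rcases hcov k hkm with h | ⟨h1, h2⟩ | ⟨p, hp, hpm, h1, h2⟩
    · exact Or.inl (by omega)
    · refine Or.inr (Or.inl ⟨h1, ?_⟩)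
      have := Nat.odd_iff.mp h1
      omega
    · have hslt : 2*p+1 < n := by omega
      have hsval : ((⟨2*p+1, hslt⟩ : Fin n) : ℕ) = 2*p+1 := rfl
      have hsmem : (⟨2*p+1, hslt⟩ : Fin n) ∈ B := by
        refine Or.inr ⟨Nat.odd_iff.mpr (by rw [hsval]; omega), ?_⟩
        show (2*p+1)/2 ∈ P
        rw [show (2*p+1)/2 = p by omega]
        exact hp
      exact Or.inr (Or.inr ⟨⟨2*p+1, hslt⟩, hsmem, Nat.odd_iff.mpr (by rw [hsval]; omega),
        by rw [hsval]; omega, by rw [hsval]; omega⟩)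
  have hall : (dstep (Arc n))^[t] B = Set.univ := by
    apply Set.eq_univ_of_forall
    intro v
    rcases Nat.even_or_odd (v : ℕ) with hv | hv
    · exact subset_iterate _ _ _ (hBE v hv)
    · exact mem_iterate_of_covered hBE t v hv (hconv v hv)
  have hdpt : dpt (Arc n) B ≤ t := Nat.sInf_le hall
  have hoddcard : {v : Fin n | Odd (v : ℕ) ∧ (v : ℕ)/2 ∈ P}.ncard ≤ P.card := by
    rw [← Set.ncard_coe_finset P]
    refine Set.ncard_le_ncard_of_injOn (fun v : Fin n => (v : ℕ)/2)
      (fun v hv => hv.2) ?_ (Set.toFinite _)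
    intro v1 h1 v2 h2 he
    have o1 := Nat.odd_iff.mp h1.1
    have o2 := Nat.odd_iff.mp h2.1
    simp only at he
    exact Fin.ext (by omega)
  have hcard : B.ncard ≤ (n+1)/2 + P.card := by
    have hsub : B ⊆ {v : Fin n | Even (v : ℕ)} ∪ {v : Fin n | Odd (v : ℕ) ∧ (v : ℕ)/2 ∈ P} := by
      rintro v (h | h)
      exacts [Or.inl h, Or.inr h]
    calc B.ncard ≤ _ := Set.ncard_le_ncard hsub (Set.toFinite _)
      _ ≤ {v : Fin n | Even (v : ℕ)}.ncard + {v : Fin n | Odd (v : ℕ) ∧ (v : ℕ)/2 ∈ P}.ncard :=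
          Set.ncard_union_le _ _
      _ ≤ (n+1)/2 + P.card := add_le_add (ncard_evens_le n) hoddcard
  have hmem : B.ncard + dpt (Arc n) B ∈
      {k | ∃ B : Set (Fin n), IsZFS (Arc n) B ∧ k = B.ncard + dpt (Arc n) B} :=
    ⟨B, ⟨t, hall⟩, rfl⟩
  calc dth (Arc n) ≤ B.ncard + dpt (Arc n) B := Nat.sInf_le hmem
    _ ≤ (n+1)/2 + P.card + t := by omega

end Upper

section Arith

lemma odd_ceil_facts (n c : ℕ) (hc : c = ⌈Real.sqrt (n+1) - 1/2⌉₊) :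
    c*c ≤ n + c ∧ n + 1 ≤ c*c + c := by
  have hs0 : (0:ℝ) ≤ Real.sqrt (n+1) := Real.sqrt_nonneg _
  have hss : Real.sqrt (n+1) * Real.sqrt (n+1) = (n:ℝ)+1 :=
    Real.mul_self_sqrt (by positivity)
  constructor
  · rcases Nat.eq_zero_or_pos c with rfl | hcpos
    · simp
    · have h1 : ((c:ℕ) - 1 : ℕ) < ⌈Real.sqrt (n+1) - 1/2⌉₊ := by omega
      have h2 : (((c:ℕ) - 1 : ℕ) : ℝ) < Real.sqrt (n+1) - 1/2 := Nat.lt_ceil.mp h1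
      have h3 : ((c:ℝ) - 1) < Real.sqrt (n+1) - 1/2 := by
        rw [Nat.cast_sub hcpos] at h2
        push_cast at h2 ⊢
        linarith
      have h4 : (0:ℝ) ≤ (c:ℝ) - 1/2 := by
        have : (1:ℝ) ≤ (c:ℝ) := by exact_mod_cast hcpos
        linarith
      have h5 : ((c:ℝ) - 1/2) * ((c:ℝ) - 1/2) < Real.sqrt (n+1) * Real.sqrt (n+1) :=
        mul_self_lt_mul_self h4 (by linarith)
      rw [hss] at h5
      by_contra hcon
      push_neg at hcon
      have : ((n:ℝ) + (c:ℝ) + 1) ≤ (c:ℝ)*(c:ℝ) := by exact_mod_cast hcon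
      nlinarith
  · have h1 : Real.sqrt (n+1) - 1/2 ≤ (c:ℝ) := hc ▸ Nat.le_ceil _
    have h5 : Real.sqrt (n+1) * Real.sqrt (n+1) ≤ ((c:ℝ) + 1/2) * ((c:ℝ) + 1/2) :=
      mul_self_le_mul_self hs0 (by linarith)
    rw [hss] at h5
    by_contra hcon
    push_neg at hcon
    have : ((c:ℝ)*(c:ℝ) + (c:ℝ) + 1) ≤ (n:ℝ) + 1 := by exact_mod_cast hcon
    nlinarith

lemma even_ceil_facts (n c : ℕ) (hc : c = ⌈Real.sqrt (n+1) - 1⌉₊) :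
    c*c ≤ n ∧ n ≤ c*c + 2*c := by
  have hs0 : (0:ℝ) ≤ Real.sqrt (n+1) := Real.sqrt_nonneg _
  have hss : Real.sqrt (n+1) * Real.sqrt (n+1) = (n:ℝ)+1 :=
    Real.mul_self_sqrt (by positivity)
  constructor
  · rcases Nat.eq_zero_or_pos c with rfl | hcpos
    · simp
    · have h1 : ((c:ℕ) - 1 : ℕ) < ⌈Real.sqrt (n+1) - 1⌉₊ := by omega
      have h2 : (((c:ℕ) - 1 : ℕ) : ℝ) < Real.sqrt (n+1) - 1 := Nat.lt_ceil.mp h1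
      have h3 : (c:ℝ) < Real.sqrt (n+1) := by
        rw [Nat.cast_sub hcpos] at h2
        push_cast at h2
        linarith
      have h5 : (c:ℝ) * (c:ℝ) < Real.sqrt (n+1) * Real.sqrt (n+1) :=
        mul_self_lt_mul_self (by positivity) h3
      rw [hss] at h5
      by_contra hcon
      push_neg at hcon
      have : ((n:ℝ) + 1) ≤ (c:ℝ)*(c:ℝ) := by exact_mod_cast hcon
      nlinarith
  · have h1 : Real.sqrt (n+1) - 1 ≤ (c:ℝ) := hc ▸ Nat.le_ceil _
    have h5 : Real.sqrt (n+1) * Real.sqrt (n+1) ≤ ((c:ℝ) + 1) * ((c:ℝ) + 1) :=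
      mul_self_le_mul_self hs0 (by linarith)
    rw [hss] at h5
    by_contra hcon
    push_neg at hcon
    have : ((c:ℝ)*(c:ℝ) + 2*(c:ℝ) + 1) ≤ (n:ℝ) := by exact_mod_cast hcon
    nlinarith

lemma up_odd_arith (m c t : ℕ) (h2 : 2*m + 2 ≤ c*c + c) (hcpos : 1 ≤ c) (ht : t = c/2) :
    m ≤ (2*t+1)*(c-1-t) + 2*t := by
  obtain ⟨u, r, hr, hcu⟩ : ∃ u r, r < 2 ∧ c = 2*u + r := ⟨c/2, c%2, by omega, by omega⟩
  rcases (by omega : r = 0 ∨ r = 1) with rfl | rfl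
  · obtain ⟨w, rfl⟩ : ∃ w, u = w + 1 := ⟨u-1, by omega⟩
    have e1 : t = w+1 := by omega
    have e2 : c - 1 - t = w := by omega
    rw [e2, e1]
    have e3 : c = 2*w+2 := by omega
    subst e3
    nlinarith
  · have e1 : t = u := by omega
    have e2 : c - 1 - t = u := by omega
    rw [e2, e1]
    have e3 : c = 2*u+1 := by omega
    subst e3
    nlinarith

lemma up_even_arith (m c t : ℕ) (h2 : 2*m ≤ c*c + 2*c) (ht : t = c/2) :
    m ≤ (2*t+1)*(c-t) + t := by
  obtain ⟨u, r, hr, hcu⟩ : ∃ u r, r < 2 ∧ c = 2*u + r := ⟨c/2, c%2, by omega, by omega⟩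
  rcases (by omega : r = 0 ∨ r = 1) with rfl | rfl
  · have e1 : t = u := by omega
    have e2 : c - t = u := by omega
    rw [e2, e1]
    have e3 : c = 2*u := by omega
    subst e3
    nlinarith
  · have e1 : t = u := by omega
    have e2 : c - t = u + 1 := by omega
    rw [e2, e1]
    have e3 : c = 2*u+1 := by omega
    subst e3
    nlinarith

lemma low_odd_arith (m c b t : ℕ) (hA1 : c*c ≤ (2*m+1) + c)
    (hcount : m ≤ t + b*(2*t+1) + t) : c ≤ b + t + 1 := by
  by_contra hlt
  push_neg at hlt
  have hz1 : ((b:ℤ)+t+2) ≤ (c:ℤ) := by exact_mod_cast (by omega : b+t+2 ≤ c)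
  have hz2 : (0:ℤ) ≤ ((c:ℤ) - ((b:ℤ)+t+2)) * ((c:ℤ) + ((b:ℤ)+t+1)) :=
    mul_nonneg (by linarith) (by positivity)
  have hz3 : ((c:ℤ))*(c:ℤ) ≤ 2*(m:ℤ)+1+(c:ℤ) := by exact_mod_cast hA1
  have hz4 : (m:ℤ) ≤ (t:ℤ) + (b:ℤ)*(2*(t:ℤ)+1) + (t:ℤ) := by exact_mod_cast hcount
  nlinarith [sq_nonneg ((b:ℤ)-(t:ℤ)), sq_nonneg ((b:ℤ)-(t:ℤ)+1)]

lemma low_even_arith (m c b t : ℕ) (hA1 : c*c ≤ 2*m)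
    (hcount : m ≤ t + b*(2*t+1)) : c ≤ b + t := by
  by_contra hlt
  push_neg at hlt
  have hz1 : ((b:ℤ)+t+1) ≤ (c:ℤ) := by exact_mod_cast (by omega : b+t+1 ≤ c)
  have hz2 : (0:ℤ) ≤ ((c:ℤ) - ((b:ℤ)+t+1)) * ((c:ℤ) + ((b:ℤ)+t)) :=
    mul_nonneg (by linarith) (by positivity)
  have hz3 : ((c:ℤ))*(c:ℤ) ≤ 2*(m:ℤ) := by exact_mod_cast hA1
  have hz4 : (m:ℤ) ≤ (t:ℤ) + (b:ℤ)*(2*(t:ℤ)+1) := by exact_mod_cast hcount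
  nlinarith [sq_nonneg ((b:ℤ)-(t:ℤ))]

end Arith

lemma odd_result (n : ℕ) (hn : Odd n) :
    dth (Arc n) = (n-1)/2 + ⌈Real.sqrt (n+1) - 1/2⌉₊ := by
  set c := ⌈Real.sqrt (n+1) - 1/2⌉₊ with hc
  obtain ⟨hA1, hA2⟩ := odd_ceil_facts n c hc
  have hno := Nat.odd_iff.mp hn
  have hn1 : 1 ≤ n := by omega
  have hcpos : 1 ≤ c := by
    rcases Nat.eq_zero_or_pos c with h0 | h
    · rw [h0] at hA2; simp at hA2
    · exact h
  set t := c/2 with ht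
  have hup : n/2 ≤ (2*t+1)*(c-1-t) + 2*t := up_odd_arith (n/2) c t (by omega) hcpos ht
  have hU : dth (Arc n) ≤ (n-1)/2 + c := by
    set P := (Finset.range (c-1-t)).image (fun i => n/2 - 1 - ((2*t+1)*i + 2*t)) with hP
    have hPcard : P.card ≤ c-1-t :=
      le_trans Finset.card_image_le (le_of_eq (Finset.card_range _))
    have h := dth_le_general n t P ?_
    · calc dth (Arc n) ≤ (n+1)/2 + P.card + t := h
        _ ≤ (n-1)/2 + c := by omega
    · intro k hk
      by_cases h1 : k + 1 ≤ t
      · exact Or.inl h1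
      by_cases h2 : n/2 ≤ k + t
      · exact Or.inr (Or.inl ⟨hn, h2⟩)
      push_neg at h1 h2
      obtain ⟨p, hpm, ⟨i, hi⟩, d1, d2⟩ := cover_odd (n/2) t k hk (by omega) (by omega)
      have hib : i < c - 1 - t := by
        by_contra hige
        push_neg at hige
        have hmul : (2*t+1)*(c-1-t) ≤ (2*t+1)*i := Nat.mul_le_mul_left _ hige
        generalize hX : (2*t+1)*(c-1-t) = X at hmul hup
        generalize hY : (2*t+1)*i = Y at hmul hi
        omega
      refine Or.inr (Or.inr ⟨p, Finset.mem_image.mpr ⟨i, Finset.mem_range.mpr hib, ?_⟩,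
        hpm, d2, d1⟩)
      generalize hY : (2*t+1)*i = Y at hi ⊢
      omega
  refine le_antisymm hU ?_
  refine le_csInf ⟨Set.univ.ncard + dpt (Arc n) Set.univ, Set.univ, ⟨0, rfl⟩, rfl⟩ ?_
  intro k hk
  obtain ⟨b, t', hle, hcount⟩ := dth_mem_data hk
  have hcnt := hcount (Finset.Ico (n/2 - t') (n/2))
    (fun j hj _ hjt => Finset.mem_Ico.mpr ⟨by omega, hj⟩)
  rw [Nat.card_Ico] at hcnt
  have hcnt2 : n/2 ≤ t' + b*(2*t'+1) + t' := by
    generalize hZ : b*(2*t'+1) = Z at hcnt ⊢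
    omega
  have hkey : c ≤ b + t' + 1 :=
    low_odd_arith (n/2) c b t' (by generalize hW : c*c = W at hA1 ⊢; omega) hcnt2
  omega

lemma even_result (n : ℕ) (hn : Even n) :
    dth (Arc n) = n/2 + ⌈Real.sqrt (n+1) - 1⌉₊ := by
  set c := ⌈Real.sqrt (n+1) - 1⌉₊ with hc
  obtain ⟨hA1, hA2⟩ := even_ceil_facts n c hc
  have hne := Nat.even_iff.mp hn
  set t := c/2 with ht
  have hup : n/2 ≤ (2*t+1)*(c-t) + t :=
    up_even_arith (n/2) c t (by generalize hW : c*c = W at hA2 ⊢; omega) ht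
  have hU : dth (Arc n) ≤ n/2 + c := by
    set P := (Finset.range (c-t)).image (fun i => n/2 - 1 - ((2*t+1)*i + t)) with hP
    have hPcard : P.card ≤ c-t :=
      le_trans Finset.card_image_le (le_of_eq (Finset.card_range _))
    have h := dth_le_general n t P ?_
    · calc dth (Arc n) ≤ (n+1)/2 + P.card + t := h
        _ ≤ n/2 + c := by omega
    · intro k hk
      by_cases h1 : k + 1 ≤ t
      · exact Or.inl h1
      push_neg at h1
      obtain ⟨p, hpm, ⟨i, hi⟩, d1, d2⟩ := cover_even (n/2) t k hk (by omega)
      have hib : i < c - t := by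
        by_contra hige
        push_neg at hige
        have hmul : (2*t+1)*(c-t) ≤ (2*t+1)*i := Nat.mul_le_mul_left _ hige
        generalize hX : (2*t+1)*(c-t) = X at hmul hup
        generalize hY : (2*t+1)*i = Y at hmul hi
        omega
      refine Or.inr (Or.inr ⟨p, Finset.mem_image.mpr ⟨i, Finset.mem_range.mpr hib, ?_⟩,
        hpm, d2, d1⟩)
      generalize hY : (2*t+1)*i = Y at hi ⊢
      omega
  refine le_antisymm hU ?_
  refine le_csInf ⟨Set.univ.ncard + dpt (Arc n) Set.univ, Set.univ, ⟨0, rfl⟩, rfl⟩ ?_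
  intro k hk
  obtain ⟨b, t', hle, hcount⟩ := dth_mem_data hk
  have hcnt := hcount ∅ (fun j hj hodd _ => absurd (Nat.odd_iff.mp hodd) (by omega))
  rw [Finset.card_empty] at hcnt
  have hcnt2 : n/2 ≤ t' + b*(2*t'+1) := by
    generalize hZ : b*(2*t'+1) = Z at hcnt ⊢
    omega
  have hkey : c ≤ b + t' :=
    low_even_arith (n/2) c b t' (by generalize hW : c*c = W at hA1 ⊢; omega) hcnt2
  omega

end AltPath

/-- The throttling number of the alternating path on `n` vertices (the orientation of the
path in which every vertex is a source or a sink; here arcs point from even-indexed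
vertices to their odd-indexed neighbors). -/
theorem stmt19 (n : ℕ) :
    (Odd n →
      dth (fun i j : Fin n =>
          ((j : ℕ) = (i : ℕ) + 1 ∨ (i : ℕ) = (j : ℕ) + 1) ∧ Even (i : ℕ))
        = (n - 1) / 2 + ⌈Real.sqrt (n + 1) - 1 / 2⌉₊) ∧
    (Even n →
      dth (fun i j : Fin n =>
          ((j : ℕ) = (i : ℕ) + 1 ∨ (i : ℕ) = (j : ℕ) + 1) ∧ Even (i : ℕ))
        = n / 2 + ⌈Real.sqrt (n + 1) - 1⌉₊) := by
  constructor
  · intro h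
    exact AltPath.odd_result n h
  · intro h
    exact AltPath.even_result n h
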